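/- Given h groups with nonnegative demand distributions D₁,…,D_h having finite positive means, suppose a max-utilization allocation (r₁,…,r_h) summing to B exists, and construct (r₁',…,r_h') by setting r_i' so that q(r_i', D_i) = ε for each i with q(r_i, D_i) > ε, and r_i' = r_i otherwise (where 0 < ε ≤ 1). Then (r') is ε-fair, uses at most B resources, and the ratio Σ_i E[min(X, r_i)] / Σ_i E[min(X, r_i')] is at most 1/ε. -/
import Mathlib


/-- Given `h` groups with utilization functions `U i r = E_{X~D_i}[min(X, r)]` and means
`μ i > 0` (so `0 ≤ U i r ≤ μ i` and `U i` is monotone), a max-utilization allocation `r`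
summing to `B`, and `0 < ε ≤ 1`: construct `r'` by lowering `r i` so that the
probability of service `q(r' i) = U i (r' i) / μ i` equals `ε` whenever `q(r i) > ε`,
and `r' i = r i` otherwise. Then `r'` is ε-fair, uses at most `B` resources, and the
price-of-fairness ratio is at most `1/ε`. -/
theorem pof_le_inv_eps (h : ℕ) (U : Fin h → ℝ → ℝ) (μ : Fin h → ℝ)
    (r r' : Fin h → ℝ) (B ε : ℝ)
    (hμ : ∀ i, 0 < μ i)
    (hU0 : ∀ i x, 0 ≤ U i x) (hUμ : ∀ i x, U i x ≤ μ i)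
    (hUmono : ∀ i, Monotone (U i))
    (hε0 : 0 < ε) (hε1 : ε ≤ 1)
    (hB : ∑ i, r i = B)
    (hr' : ∀ i, (ε < U i (r i) / μ i → U i (r' i) = ε * μ i ∧ r' i ≤ r i) ∧
                (U i (r i) / μ i ≤ ε → r' i = r i)) :
    (∀ i j, |U i (r' i) / μ i - U j (r' j) / μ j| ≤ ε) ∧
    (∑ i, r' i ≤ B) ∧
    (∑ i, U i (r i)) / (∑ i, U i (r' i)) ≤ 1 / ε := by
  have hqle : ∀ i, U i (r' i) / μ i ≤ ε := by
    intro i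
    rcases le_or_gt (U i (r i) / μ i) ε with hc | hc
    · rw [(hr' i).2 hc]; exact hc
    · rw [((hr' i).1 hc).1]
      rw [mul_div_assoc, div_self (hμ i).ne', mul_one]
  have hq0 : ∀ i, 0 ≤ U i (r' i) / μ i := fun i =>
    div_nonneg (hU0 i _) (hμ i).le
  have hle : ∀ i, r' i ≤ r i := by
    intro i
    rcases le_or_gt (U i (r i) / μ i) ε with hc | hc
    · rw [(hr' i).2 hc]
    · exact ((hr' i).1 hc).2
  have hkey : ∀ i, ε * U i (r i) ≤ U i (r' i) := by
    intro i
    rcases le_or_gt (U i (r i) / μ i) ε with hc | hc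
    · rw [(hr' i).2 hc]
      nlinarith [hU0 i (r i)]
    · rw [((hr' i).1 hc).1]
      exact mul_le_mul_of_nonneg_left (hUμ i _) hε0.le
  refine ⟨fun i j => abs_sub_le_iff.2 ⟨by linarith [hqle i, hq0 j], by linarith [hqle j, hq0 i]⟩,
    hB ▸ Finset.sum_le_sum fun i _ => hle i, ?_⟩
  have hsum : ε * ∑ i, U i (r i) ≤ ∑ i, U i (r' i) := by
    rw [Finset.mul_sum]; exact Finset.sum_le_sum fun i _ => hkey i
  have h0' : (0:ℝ) ≤ ∑ i, U i (r' i) :=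
    Finset.sum_nonneg fun i _ => hU0 i _
  rcases h0'.eq_or_lt with h0 | h0
  · have h1 : ∑ i, U i (r i) ≤ 0 := by nlinarith
    have h2 : (0:ℝ) ≤ ∑ i, U i (r i) := Finset.sum_nonneg fun i _ => hU0 i _
    have : ∑ i, U i (r i) = 0 := le_antisymm h1 h2
    rw [this, zero_div]
    positivity
  · rw [div_le_div_iff₀ h0 hε0]
    linarith
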